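/- Define operators on L¹([0,1]) by P_α u(x) = (1/2)u(2x) for x ∈ [0,1/2), P_α u(x) = (1/2)u(2x-1) for x ∈ [1/2,1], and P_β u(x) = (1/4)u(x/2) + (1/4)u((x+1)/2). Let P₀ = P_α + P_β. Then for the Haar subspaces H_ℓ (the span of {χ_{ℓ,k} : 0 ≤ k < 2^{ℓ-1}}), one has P_α(H_ℓ) ⊆ H_{ℓ+1} for all ℓ ≥ 1, P_β(H_{ℓ+1}) ⊆ H_ℓ for all ℓ ≥ 1, and P_β(H_1) = {0}. -/
import Mathlib


/-- The Haar mother wavelet: `1` on `[0,1/2)`, `-1` on `[1/2,1)`, `0` elsewhere. -/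
noncomputable def haarChi (x : ℝ) : ℝ :=
  if 0 ≤ x ∧ x < 1 / 2 then 1 else if 1 / 2 ≤ x ∧ x < 1 then -1 else 0

/-- The Haar function `χ_{ℓ,k}(x) = χ(2^{ℓ-1} x - k)`. -/
noncomputable def chiLK (ℓ k : ℕ) (x : ℝ) : ℝ := haarChi (2 ^ (ℓ - 1) * x - k)

/-- The level-`ℓ` Haar subspace `H_ℓ`, spanned by `{χ_{ℓ,k} : 0 ≤ k < 2^{ℓ-1}}`. -/
noncomputable def Hsub (ℓ : ℕ) : Submodule ℝ (ℝ → ℝ) :=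
  Submodule.span ℝ {g | ∃ k < 2 ^ (ℓ - 1), g = chiLK ℓ k}

/-- The operator `P_α u(x) = (1/2)u(2x)` on `[0,1/2)`, `(1/2)u(2x-1)` on `[1/2,1]`. -/
noncomputable def Pa (u : ℝ → ℝ) (x : ℝ) : ℝ :=
  if x < 1 / 2 then (1 / 2) * u (2 * x) else (1 / 2) * u (2 * x - 1)

/-- The operator `P_β u(x) = (1/4)u(x/2) + (1/4)u((x+1)/2)`. -/
noncomputable def Pb (u : ℝ → ℝ) (x : ℝ) : ℝ :=
  (1 / 4) * u (x / 2) + (1 / 4) * u ((x + 1) / 2)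

lemma haarChi_neg {x : ℝ} (h : x < 0) : haarChi x = 0 := by
  unfold haarChi
  rw [if_neg (fun hc => absurd hc.1 (by linarith)),
    if_neg (fun hc => absurd hc.1 (by linarith))]

lemma haarChi_ge {x : ℝ} (h : 1 ≤ x) : haarChi x = 0 := by
  unfold haarChi
  rw [if_neg (fun hc => absurd hc.2 (by linarith)),
    if_neg (fun hc => absurd hc.2 (by linarith))]

lemma Pa_add (u v : ℝ → ℝ) : Pa (u + v) = Pa u + Pa v := by
  funext x
  simp only [Pa, Pi.add_apply]
  split_ifs <;> ring

lemma Pa_smul (c : ℝ) (u : ℝ → ℝ) : Pa (c • u) = c • Pa u := by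
  funext x
  simp only [Pa, Pi.smul_apply, smul_eq_mul]
  split_ifs <;> ring

lemma Pb_add (u v : ℝ → ℝ) : Pb (u + v) = Pb u + Pb v := by
  funext x
  simp only [Pb, Pi.add_apply]
  ring

lemma Pb_smul (c : ℝ) (u : ℝ → ℝ) : Pb (c • u) = c • Pb u := by
  funext x
  simp only [Pb, Pi.smul_apply, smul_eq_mul]
  ring

lemma two_pow_pos' (m : ℕ) : (0:ℝ) < 2 ^ m := by positivity

lemma Pa_chi (m k : ℕ) (hk : k < 2 ^ m) :
    Pa (chiLK (m + 1) k)
      = (1/2 : ℝ) • chiLK (m + 2) k + (1/2 : ℝ) • chiLK (m + 2) (2 ^ m + k) := by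
  have hck : ((k:ℝ) + 1) ≤ 2 ^ m := by exact_mod_cast Nat.succ_le_of_lt hk
  have hp : (0:ℝ) < 2 ^ m := two_pow_pos' m
  funext x
  simp only [Pa, chiLK, Pi.add_apply, Pi.smul_apply, smul_eq_mul,
    Nat.add_sub_cancel, show m + 2 - 1 = m + 1 from rfl]
  by_cases hx : x < 1/2
  · rw [if_pos hx]
    have hz : haarChi (2 ^ (m + 1) * x - ((2 ^ m + k : ℕ) : ℝ)) = 0 := by
      apply haarChi_neg
      push_cast
      have h := mul_lt_mul_of_pos_left hx (show (0:ℝ) < 2 ^ (m + 1) by positivity)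
      have he : (2:ℝ) ^ (m + 1) * (1 / 2) = 2 ^ m := by ring
      have hkn : (0:ℝ) ≤ (k:ℝ) := Nat.cast_nonneg k
      linarith
    rw [hz]
    have : (2:ℝ) ^ m * (2 * x) = 2 ^ (m + 1) * x := by ring
    rw [this]
    ring
  · rw [if_neg hx]
    push_neg at hx
    have hz : haarChi (2 ^ (m + 1) * x - (k : ℝ)) = 0 := by
      apply haarChi_ge
      have h := mul_le_mul_of_nonneg_left hx (show (0:ℝ) ≤ 2 ^ (m + 1) by positivity)
      have he : (2:ℝ) ^ (m + 1) * (1 / 2) = 2 ^ m := by ring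
      linarith
    rw [hz]
    have : (2:ℝ) ^ m * (2 * x - 1) = 2 ^ (m + 1) * x - 2 ^ m := by ring
    rw [this]
    have hc : ((2 ^ m + k : ℕ) : ℝ) = 2 ^ m + k := by push_cast; ring
    rw [hc]
    have : (2:ℝ) ^ (m + 1) * x - (2 ^ m + (k:ℝ)) = 2 ^ (m + 1) * x - 2 ^ m - k := by ring
    rw [this]
    ring

lemma Pb_chi (m k : ℕ) (hk : k < 2 ^ (m + 1)) :
    ∃ k' < 2 ^ m, Set.EqOn (Pb (chiLK (m + 2) k)) ((1/4 : ℝ) • chiLK (m + 1) k')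
      (Set.Ico 0 1) := by
  have hp : (0:ℝ) < 2 ^ m := two_pow_pos' m
  by_cases h : k < 2 ^ m
  · refine ⟨k, h, fun x hx => ?_⟩
    obtain ⟨hx0, hx1⟩ := hx
    have hck : ((k:ℝ) + 1) ≤ 2 ^ m := by exact_mod_cast Nat.succ_le_of_lt h
    simp only [Pb, chiLK, Pi.smul_apply, smul_eq_mul,
      Nat.add_sub_cancel, show m + 2 - 1 = m + 1 from rfl]
    have e1 : (2:ℝ) ^ (m + 1) * (x / 2) = 2 ^ m * x := by ring
    have e2 : (2:ℝ) ^ (m + 1) * ((x + 1) / 2) = 2 ^ m * x + 2 ^ m := by ring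
    rw [e1, e2]
    have hz : haarChi (2 ^ m * x + 2 ^ m - (k : ℝ)) = 0 := by
      apply haarChi_ge
      nlinarith
    rw [hz]
    ring
  · push_neg at h
    refine ⟨k - 2 ^ m, by omega, fun x hx => ?_⟩
    obtain ⟨hx0, hx1⟩ := hx
    have hck : ((2:ℝ) ^ m) ≤ k := by exact_mod_cast h
    simp only [Pb, chiLK, Pi.smul_apply, smul_eq_mul,
      Nat.add_sub_cancel, show m + 2 - 1 = m + 1 from rfl]
    have e1 : (2:ℝ) ^ (m + 1) * (x / 2) = 2 ^ m * x := by ring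
    have e2 : (2:ℝ) ^ (m + 1) * ((x + 1) / 2) = 2 ^ m * x + 2 ^ m := by ring
    rw [e1, e2]
    have hz : haarChi (2 ^ m * x - (k : ℝ)) = 0 := by
      apply haarChi_neg
      nlinarith
    rw [hz]
    have hc : ((k - 2 ^ m : ℕ) : ℝ) = (k:ℝ) - 2 ^ m := by
      push_cast [h]
      ring
    rw [hc]
    have : (2:ℝ) ^ m * x - ((k:ℝ) - 2 ^ m) = 2 ^ m * x + 2 ^ m - k := by ring
    rw [this]
    ring

/-- As operators on `L¹([0,1])` (functions identified by their values on `[0,1)`):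
`P_α(H_ℓ) ⊆ H_{ℓ+1}` and `P_β(H_{ℓ+1}) ⊆ H_ℓ` for all `ℓ ≥ 1`, and `P_β(H_1) = {0}`. -/
theorem haar_subspace_transitions :
    (∀ ℓ : ℕ, 1 ≤ ℓ → ∀ u ∈ Hsub ℓ,
      ∃ v ∈ Hsub (ℓ + 1), Set.EqOn (Pa u) v (Set.Ico 0 1))
    ∧ (∀ ℓ : ℕ, 1 ≤ ℓ → ∀ u ∈ Hsub (ℓ + 1),
      ∃ v ∈ Hsub ℓ, Set.EqOn (Pb u) v (Set.Ico 0 1))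
    ∧ (∀ u ∈ Hsub 1, ∀ x ∈ Set.Ico (0 : ℝ) 1, Pb u x = 0) := by
  refine ⟨?_, ?_, ?_⟩
  · -- Pa part
    intro ℓ hℓ u hu
    obtain ⟨m, rfl⟩ : ∃ m, ℓ = m + 1 := ⟨ℓ - 1, (Nat.succ_pred_eq_of_pos hℓ).symm⟩
    refine ⟨Pa u, ?_, fun x _ => rfl⟩
    induction hu using Submodule.span_induction with
    | mem g hg =>
        obtain ⟨k, hk, rfl⟩ := hg
        simp only [Nat.add_sub_cancel] at hk
        rw [Pa_chi m k hk]
        have hk' : k < 2 ^ (m + 1) :=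
          lt_of_lt_of_le hk (Nat.pow_le_pow_right (by norm_num) (by omega))
        have hk'' : 2 ^ m + k < 2 ^ (m + 1) := by
          have : 2 ^ (m + 1) = 2 ^ m + 2 ^ m := by ring
          omega
        have h1 : chiLK (m + 2) k ∈ Hsub (m + 2) :=
          Submodule.subset_span ⟨k, hk', rfl⟩
        have h2 : chiLK (m + 2) (2 ^ m + k) ∈ Hsub (m + 2) :=
          Submodule.subset_span ⟨2 ^ m + k, hk'', rfl⟩
        exact Submodule.add_mem _ (Submodule.smul_mem _ _ h1) (Submodule.smul_mem _ _ h2)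
    | zero =>
        have : Pa (0 : ℝ → ℝ) = 0 := by
          funext x; simp [Pa]
        rw [this]; exact Submodule.zero_mem _
    | add u v hu hv pu pv =>
        rw [Pa_add]; exact Submodule.add_mem _ pu pv
    | smul c u hu pu =>
        rw [Pa_smul]; exact Submodule.smul_mem _ _ pu
  · -- Pb part
    intro ℓ hℓ u hu
    obtain ⟨m, rfl⟩ : ∃ m, ℓ = m + 1 := ⟨ℓ - 1, (Nat.succ_pred_eq_of_pos hℓ).symm⟩
    induction hu using Submodule.span_induction with
    | mem g hg =>
        obtain ⟨k, hk, rfl⟩ := hg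
        obtain ⟨k', hk', heq⟩ := Pb_chi m k hk
        exact ⟨(1/4 : ℝ) • chiLK (m + 1) k',
          Submodule.smul_mem _ _ (Submodule.subset_span ⟨k', hk', rfl⟩), heq⟩
    | zero =>
        refine ⟨0, Submodule.zero_mem _, fun x _ => ?_⟩
        simp [Pb]
    | add u v hu hv pu pv =>
        obtain ⟨v1, h1, e1⟩ := pu
        obtain ⟨v2, h2, e2⟩ := pv
        refine ⟨v1 + v2, Submodule.add_mem _ h1 h2, fun x hx => ?_⟩
        rw [Pb_add]
        simp only [Pi.add_apply, e1 hx, e2 hx]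
    | smul c u hu pu =>
        obtain ⟨v1, h1, e1⟩ := pu
        refine ⟨c • v1, Submodule.smul_mem _ _ h1, fun x hx => ?_⟩
        rw [Pb_smul]
        simp only [Pi.smul_apply, e1 hx]
  · -- Pb kills H_1
    intro u hu
    induction hu using Submodule.span_induction with
    | mem g hg =>
        obtain ⟨k, hk, rfl⟩ := hg
        intro x hx
        obtain ⟨hx0, hx1⟩ := hx
        obtain rfl : k = 0 := by simpa using hk
        simp only [Pb, chiLK, show (1:ℕ) - 1 = 0 from rfl, pow_zero, one_mul,
          Nat.cast_zero, sub_zero]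
        have e1 : haarChi (x / 2) = 1 := by
          unfold haarChi
          rw [if_pos ⟨by linarith, by linarith⟩]
        have e2 : haarChi ((x + 1) / 2) = -1 := by
          unfold haarChi
          rw [if_neg (fun hc => absurd hc.2 (by linarith)),
            if_pos ⟨by linarith, by linarith⟩]
        rw [e1, e2]
        ring
    | zero =>
        intro x hx; simp [Pb]
    | add u v hu hv pu pv =>
        intro x hx
        rw [Pb_add]
        simp only [Pi.add_apply, pu x hx, pv x hx, add_zero]
    | smul c u hu pu =>
        intro x hx
        rw [Pb_smul]
        simp only [Pi.smul_apply, pu x hx, smul_eq_mul, mul_zero]
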